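/- Let G be a graph on vertex set V where each vertex v has a degree bound B_v ≤ N = |V|, and let G' be the augmented graph obtained by attaching N - B_v new pendant (degree-1) auxiliary vertices to each vertex v. Then G has a spanning tree in which every vertex v has degree at most B_v if and only if G' has a spanning tree of maximum degree at most N. -/

import Mathlib

/-- The augmented graph: attach `N - B v` new pendant auxiliary vertices to each
vertex `v` of `G`. -/
def augmented {V : Type*} (G : SimpleGraph V) (B : V → ℕ) (N : ℕ) :
    SimpleGraph (V ⊕ (Σ v : V, Fin (N - B v))) :=
  SimpleGraph.fromRel (fun a b =>
    match a, b with
    | Sum.inl u, Sum.inl v => G.Adj u v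
    | Sum.inl u, Sum.inr w => u = w.1
    | _, _ => False)

namespace AugAux

open SimpleGraph

variable {V : Type*} {G : SimpleGraph V} {B : V → ℕ} {N : ℕ}

/-- Projection to the base vertex set. -/
def toBase {V : Type*} {B : V → ℕ} {N : ℕ} : (V ⊕ (Σ v : V, Fin (N - B v))) → V
  | Sum.inl u => u
  | Sum.inr w => w.1

@[simp] lemma toBase_inl (u : V) :
    toBase (B := B) (N := N) (Sum.inl u) = u := rfl

@[simp] lemma toBase_inr (w : Σ v : V, Fin (N - B v)) :
    toBase (B := B) (N := N) (Sum.inr w) = w.1 := rfl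

lemma aug_adj_inl_inl {u v : V} :
    (augmented G B N).Adj (Sum.inl u) (Sum.inl v) ↔ G.Adj u v := by
  simp only [augmented, fromRel_adj]
  constructor
  · rintro ⟨_, h | h⟩
    · exact h
    · exact h.symm
  · intro h
    exact ⟨by simp [h.ne], Or.inl h⟩

lemma aug_adj_inl_inr {u : V} {w : Σ v : V, Fin (N - B v)} :
    (augmented G B N).Adj (Sum.inl u) (Sum.inr w) ↔ u = w.1 := by
  simp only [augmented, fromRel_adj]
  constructor
  · rintro ⟨_, h | h⟩
    · exact h
    · exact h.elim
  · intro h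
    exact ⟨by simp, Or.inl h⟩

lemma aug_adj_inr {w : Σ v : V, Fin (N - B v)} {x : V ⊕ (Σ v : V, Fin (N - B v))} :
    (augmented G B N).Adj (Sum.inr w) x → x = Sum.inl w.1 := by
  intro h
  rcases x with u | w'
  · rw [adj_comm, aug_adj_inl_inr] at h
    simp [h]
  · exfalso
    rcases h with ⟨_, h | h⟩ <;> exact h

lemma reachable_map_of_adj {α β : Type*} {H : SimpleGraph α} {K : SimpleGraph β}
    (f : α → β) (h : ∀ ⦃a b⦄, H.Adj a b → K.Reachable (f a) (f b))
    {x y : α} (hr : H.Reachable x y) : K.Reachable (f x) (f y) := by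
  obtain ⟨p⟩ := hr
  induction p with
  | nil => exact Reachable.refl _
  | cons ha _ ih => exact (h ha).trans ih

lemma not_reachable_delete_of_unique {α : Type*} {H : SimpleGraph α} {p q : α}
    (hpq : p ≠ q) (huniq : ∀ x, H.Adj p x → x = q) :
    ¬ (H \ SimpleGraph.fromEdgeSet {s(p, q)}).Reachable p q := by
  rintro ⟨pw⟩
  cases pw with
  | nil => exact hpq rfl
  | cons h pw' =>
    rw [sdiff_adj] at h
    obtain ⟨h1, h2⟩ := h
    have hx := huniq _ h1
    subst hx
    exact h2 (by simp [fromEdgeSet_adj, hpq])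

lemma augmented_mono {T : SimpleGraph V} (h : T ≤ G) :
    augmented T B N ≤ augmented G B N := by
  intro a b hab
  simp only [augmented, fromRel_adj] at hab ⊢
  obtain ⟨hne, hr⟩ := hab
  refine ⟨hne, ?_⟩
  rcases a with u | w <;> rcases b with u' | w'
  · exact hr.imp (fun h' => h h') (fun h' => h h')
  · exact hr
  · exact hr
  · exact hr

end AugAux

open SimpleGraph AugAux in
/-- `G` has a spanning tree in which every vertex `v` has degree at most `B v`
iff the augmented graph has a spanning tree of maximum degree at most `N = |V|`. -/
theorem stmt4 {V : Type*} [Fintype V] (G : SimpleGraph V) (B : V → ℕ) (N : ℕ)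
    (hN : Fintype.card V = N) (hconn : G.Connected)
    (hB : ∀ v, 1 ≤ B v ∧ B v ≤ N) :
    (∃ T : SimpleGraph V, T ≤ G ∧ T.IsTree ∧ ∀ v, (T.neighborSet v).ncard ≤ B v) ↔
    (∃ T' : SimpleGraph (V ⊕ (Σ v : V, Fin (N - B v))),
      T' ≤ augmented G B N ∧ T'.IsTree ∧ ∀ x, (T'.neighborSet x).ncard ≤ N) := by
  classical
  have hNeV : Nonempty V := hconn.nonempty
  have hN1 : 1 ≤ N := by
    rw [← hN]
    exact Fintype.card_pos
  constructor
  · -- forward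
    rintro ⟨T, hTG, hTtree, hTdeg⟩
    refine ⟨augmented T B N, augmented_mono hTG, ⟨?_, ?_⟩, ?_⟩
    · -- connected
      have hstep : ∀ x : V ⊕ (Σ v : V, Fin (N - B v)),
          (augmented T B N).Reachable x (Sum.inl (toBase x)) := by
        rintro (u | w)
        · exact Reachable.refl _
        · exact (Adj.reachable (by rw [toBase_inr, adj_comm, aug_adj_inl_inr])).symm.symm
      have hinl : ∀ u v : V, (augmented T B N).Reachable (Sum.inl u) (Sum.inl v) := by
        intro u v
        exact reachable_map_of_adj Sum.inl
          (fun a b hab => (Adj.reachable (by rwa [aug_adj_inl_inl])))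
          (hTtree.isConnected.preconnected u v)
      haveI : Nonempty (V ⊕ (Σ v : V, Fin (N - B v))) := ⟨Sum.inl (Classical.arbitrary V)⟩
      exact Connected.mk (fun x y => (hstep x).trans ((hinl _ _).trans (hstep y).symm))
    · -- acyclic
      rw [isAcyclic_iff_forall_adj_isBridge]
      intro a b hab
      rw [isBridge_iff]
      rcases a with u | w
      · rcases b with v | w
        · -- base edge
          have huv : T.Adj u v := aug_adj_inl_inl.mp hab
          have hbridge := (isAcyclic_iff_forall_adj_isBridge.mp hTtree.IsAcyclic) huv
          rw [isBridge_iff] at hbridge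
          intro hreach
          apply hbridge
          refine reachable_map_of_adj toBase (fun a b hab' => ?_) hreach
          rw [deleteEdges, sdiff_adj] at hab'
          obtain ⟨h1, h2⟩ := hab'
          rcases a with u' | w' <;> rcases b with v' | w'
          · refine Adj.reachable ?_
            rw [deleteEdges, sdiff_adj]
            refine ⟨aug_adj_inl_inl.mp h1, ?_⟩
            intro hcon
            apply h2
            rw [fromEdgeSet_adj] at hcon ⊢
            refine ⟨?_, by simp [(aug_adj_inl_inl.mp h1).ne]⟩
            simp only [Set.mem_singleton_iff, Sym2.eq_iff, toBase_inl] at hcon ⊢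
            rcases hcon.1 with ⟨h3, h4⟩ | ⟨h3, h4⟩
            · exact Or.inl ⟨congrArg Sum.inl h3, congrArg Sum.inl h4⟩
            · exact Or.inr ⟨congrArg Sum.inl h3, congrArg Sum.inl h4⟩
          · have h3 : u' = w'.1 := aug_adj_inl_inr.mp h1
            rw [toBase_inl, toBase_inr, h3]
          · have h3 : v' = w'.1 := aug_adj_inl_inr.mp ((augmented T B N).adj_symm h1)
            rw [toBase_inl, toBase_inr, h3]
          · exact absurd (aug_adj_inr h1) (by simp)
        · -- pendant edge, from the base side
          have hw : u = w.1 := aug_adj_inl_inr.mp hab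
          intro hreach
          refine not_reachable_delete_of_unique (H := augmented T B N) (p := Sum.inr w)
            (q := Sum.inl u) (by simp) (fun x hx => by rw [aug_adj_inr hx, hw]) ?_
          rw [Sym2.eq_swap] at hreach
          exact hreach.symm
      · -- pendant edge, from the pendant side
        have hb : b = Sum.inl w.1 := aug_adj_inr hab
        subst hb
        exact not_reachable_delete_of_unique (by simp) (fun x hx => aug_adj_inr hx)
    · -- degrees
      rintro (v | w)
      · have hsub : (augmented T B N).neighborSet (Sum.inl v) ⊆
            (Sum.inl '' T.neighborSet v) ∪
            (Sum.inr '' Set.range (fun i : Fin (N - B v) => (⟨v, i⟩ : Σ v : V, Fin (N - B v)))) := by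
          rintro (u | w) hx
          · exact Or.inl ⟨u, (aug_adj_inl_inl (G := T)).mp hx, rfl⟩
          · have : v = w.1 := (aug_adj_inl_inr (G := T)).mp hx
            refine Or.inr ⟨w, ?_, rfl⟩
            rcases w with ⟨w1, w2⟩
            subst this
            exact ⟨w2, rfl⟩
        calc ((augmented T B N).neighborSet (Sum.inl v)).ncard
            ≤ ((Sum.inl '' T.neighborSet v) ∪
              (Sum.inr '' Set.range (fun i : Fin (N - B v) => (⟨v, i⟩ : Σ v : V, Fin (N - B v))))).ncard :=
              Set.ncard_le_ncard hsub (Set.toFinite _)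
          _ ≤ (Sum.inl '' T.neighborSet v).ncard +
              (Sum.inr '' Set.range (fun i : Fin (N - B v) => (⟨v, i⟩ : Σ v : V, Fin (N - B v)))).ncard :=
              Set.ncard_union_le _ _
          _ ≤ B v + (N - B v) := by
              gcongr
              · calc (Sum.inl '' T.neighborSet v).ncard ≤ (T.neighborSet v).ncard :=
                    Set.ncard_image_le (Set.toFinite _)
                  _ ≤ B v := hTdeg v
              · calc (Sum.inr '' Set.range (fun i : Fin (N - B v) => (⟨v, i⟩ : Σ v : V, Fin (N - B v)))).ncard
                    ≤ (Set.range (fun i : Fin (N - B v) => (⟨v, i⟩ : Σ v : V, Fin (N - B v)))).ncard :=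
                    Set.ncard_image_le (Set.toFinite _)
                  _ ≤ (Set.univ : Set (Fin (N - B v))).ncard := by
                    rw [← Set.image_univ]
                    exact Set.ncard_image_le (Set.toFinite _)
                  _ = N - B v := by simp [Set.ncard_univ]
          _ = N := by have := (hB v).2; omega
      · have : (augmented T B N).neighborSet (Sum.inr w) ⊆ {Sum.inl w.1} := by
          intro x hx
          simp [aug_adj_inr hx]
        calc ((augmented T B N).neighborSet (Sum.inr w)).ncard
            ≤ ({Sum.inl w.1} : Set _).ncard := Set.ncard_le_ncard this (Set.toFinite _)
          _ = 1 := Set.ncard_singleton _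
          _ ≤ N := hN1
  · -- backward
    rintro ⟨T', hle, htree, hdeg⟩
    set T : SimpleGraph V :=
      { Adj := fun u v => T'.Adj (Sum.inl u) (Sum.inl v)
        symm := ⟨fun u v h => T'.adj_symm h⟩
        loopless := ⟨fun u h => T'.loopless.irrefl _ h⟩ } with hT
    have hTadj : ∀ u v : V, T.Adj u v ↔ T'.Adj (Sum.inl u) (Sum.inl v) := fun _ _ => Iff.rfl
    have hTG : T ≤ G := fun u v h => aug_adj_inl_inl.mp (hle h)
    have hpend : ∀ w : Σ v : V, Fin (N - B v), T'.Adj (Sum.inl w.1) (Sum.inr w) := by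
      intro w
      have hreach : T'.Reachable (Sum.inr w) (Sum.inl w.1) :=
        htree.isConnected.preconnected _ _
      obtain ⟨p⟩ := hreach
      cases p with
      | cons h p' =>
        have := aug_adj_inr (hle h)
        subst this
        exact T'.adj_symm h
    have hproj : ∀ ⦃a b⦄, T'.Adj a b → T.Reachable (toBase a) (toBase b) := by
      rintro (u | w) (u' | w') h
      · exact Adj.reachable h
      · have h3 : u = w'.1 := aug_adj_inl_inr.mp (hle h)
        rw [toBase_inl, toBase_inr, h3]
      · have h3 : u' = w.1 := aug_adj_inl_inr.mp (hle (T'.adj_symm h))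
        rw [toBase_inl, toBase_inr, h3]
      · exact absurd (aug_adj_inr (hle h)) (by simp)
    refine ⟨T, hTG, ⟨Connected.mk fun u v => ?_, ?_⟩, ?_⟩
    · -- connected
      have := htree.isConnected.preconnected (Sum.inl u) (Sum.inl v)
      exact reachable_map_of_adj toBase hproj this
    · -- acyclic
      rw [isAcyclic_iff_forall_adj_isBridge]
      intro u v huv
      rw [isBridge_iff]
      intro hreach
      have hbridge := (isAcyclic_iff_forall_adj_isBridge.mp htree.IsAcyclic) (hTadj u v |>.mp huv)
      rw [isBridge_iff] at hbridge
      apply hbridge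
      refine reachable_map_of_adj Sum.inl (fun a b hab => Adj.reachable ?_) hreach
      rw [deleteEdges, sdiff_adj] at hab ⊢
      obtain ⟨h1, h2⟩ := hab
      refine ⟨h1, fun hcon => h2 ?_⟩
      rw [fromEdgeSet_adj] at hcon ⊢
      refine ⟨?_, h1.ne⟩
      simp only [Set.mem_singleton_iff, Sym2.eq_iff, Sum.inl.injEq] at hcon ⊢
      exact hcon.1
    · -- degrees
      intro v
      have hsub : (Sum.inl '' T.neighborSet v) ∪
          (Sum.inr '' Set.range (fun i : Fin (N - B v) => (⟨v, i⟩ : Σ v : V, Fin (N - B v)))) ⊆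
          T'.neighborSet (Sum.inl v) := by
        rintro x (⟨u, hu, rfl⟩ | ⟨w, ⟨i, rfl⟩, rfl⟩)
        · exact hu
        · exact hpend ⟨v, i⟩
      have hdisj : Disjoint (Sum.inl '' T.neighborSet v)
          (Sum.inr '' Set.range (fun i : Fin (N - B v) => (⟨v, i⟩ : Σ v : V, Fin (N - B v)))) := by
        rw [Set.disjoint_iff_forall_ne]
        rintro _ ⟨u, _, rfl⟩ _ ⟨w, _, rfl⟩
        simp
      have hcount : (T.neighborSet v).ncard + (N - B v) ≤ N := by
        calc (T.neighborSet v).ncard + (N - B v)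
            = (Sum.inl '' T.neighborSet v).ncard +
              (Sum.inr '' Set.range (fun i : Fin (N - B v) => (⟨v, i⟩ : Σ v : V, Fin (N - B v)))).ncard := by
              rw [Set.ncard_image_of_injective _ Sum.inl_injective,
                Set.ncard_image_of_injective _ Sum.inr_injective,
                show Set.range _ = _ '' Set.univ from (Set.image_univ).symm,
                Set.ncard_image_of_injective _ (fun i j hij => by simpa using hij),
                Set.ncard_univ]
              simp
          _ = ((Sum.inl '' T.neighborSet v) ∪
              (Sum.inr '' Set.range (fun i : Fin (N - B v) => (⟨v, i⟩ : Σ v : V, Fin (N - B v))))).ncard :=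
              (Set.ncard_union_eq hdisj (Set.toFinite _) (Set.toFinite _)).symm
          _ ≤ (T'.neighborSet (Sum.inl v)).ncard := Set.ncard_le_ncard hsub (Set.toFinite _)
          _ ≤ N := hdeg _
      have := (hB v).2
      omega
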